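/- Let T be a tree on node set {0,1,...,N} with positive edge susceptances b_e, and let L̃ be its reduced susceptance Laplacian with node 0 as reference. Then for all i, j ∈ {1,...,N}, the entry [L̃^{-1}]_{ij} equals the sum of the inverse susceptances 1/b_e over all edges e that lie on both the path from i to 0 and the path from j to 0 in T. -/

import Mathlib

open Matrix

/-- The reduced susceptance Laplacian of a weighted graph on `Fin (N+1)` with
node `0` taken as the reference node (its row and column removed), where
`b e` is the susceptance of edge `e`. -/
noncomputable def reducedLap (N : ℕ) (G : SimpleGraph (Fin (N + 1)))
    [DecidableRel G.Adj] (b : Sym2 (Fin (N + 1)) → ℝ) :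
    Matrix (Fin N) (Fin N) ℝ := fun i j =>
  if i = j then ∑ k : Fin (N + 1), if G.Adj i.succ k then b s(i.succ, k) else 0
  else if G.Adj i.succ j.succ then -b s(i.succ, j.succ) else 0

open SimpleGraph

namespace Stmt11Aux

variable {N : ℕ} {G : SimpleGraph (Fin (N + 1))}

noncomputable def P (hT : G.IsTree) (v : Fin (N + 1)) : G.Walk v 0 :=
  (hT.existsUnique_path v 0).exists.choose

lemma P_isPath (hT : G.IsTree) (v : Fin (N + 1)) : (P hT v).IsPath :=
  (hT.existsUnique_path v 0).exists.choose_spec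

lemma P_unique (hT : G.IsTree) {v : Fin (N + 1)} (w : G.Walk v 0) (hw : w.IsPath) :
    w = P hT v :=
  (hT.existsUnique_path v 0).unique hw (P_isPath hT v)

lemma P_zero (hT : G.IsTree) : P hT (0 : Fin (N + 1)) = Walk.nil :=
  (P_unique hT Walk.nil (Walk.IsPath.nil)).symm

lemma dichotomy (hT : G.IsTree) {v u : Fin (N + 1)} (h : G.Adj v u) :
    P hT v = Walk.cons h (P hT u) ∨ P hT u = Walk.cons h.symm (P hT v) := by
  by_cases hv : v ∈ (P hT u).support
  · right
    have hdrop : P hT v = (P hT u).dropUntil v hv :=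
      (P_unique hT _ ((P_isPath hT u).dropUntil hv)).symm
    have hu : u ∉ (P hT v).support := by
      rw [hdrop]
      intro hu
      have hspec := SimpleGraph.Walk.take_spec (P hT u) hv
      have hnd : ((P hT u).takeUntil v hv |>.append ((P hT u).dropUntil v hv)).support.Nodup := by
        rw [hspec]; exact (P_isPath hT u).support_nodup
      rw [SimpleGraph.Walk.support_append] at hnd
      have h1 : u ∈ ((P hT u).takeUntil v hv).support := Walk.start_mem_support _
      have h2 : u ∈ ((P hT u).dropUntil v hv).support.tail := by
        have := SimpleGraph.Walk.support_eq_cons ((P hT u).dropUntil v hv)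
        rw [this] at hu
        rcases List.mem_cons.1 hu with he | ht
        · exact absurd he.symm h.ne
        · exact ht
      exact (List.disjoint_of_nodup_append hnd) h1 h2
    exact (P_unique hT (Walk.cons h.symm (P hT v))
      ((Walk.cons_isPath_iff _ _).2 ⟨P_isPath hT v, hu⟩)).symm
  · left
    exact (P_unique hT (Walk.cons h (P hT u))
      ((Walk.cons_isPath_iff _ _).2 ⟨P_isPath hT u, hv⟩)).symm

end Stmt11Aux

namespace Stmt11Aux2
open Stmt11Aux

variable {N : ℕ} {G : SimpleGraph (Fin (N + 1))}

/-- potential at `v` for unit injection at `w`. -/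
noncomputable def F (hT : G.IsTree) (b : Sym2 (Fin (N + 1)) → ℝ) (w v : Fin (N + 1)) : ℝ :=
  ∑ e ∈ (P hT v).edges.toFinset ∩ (P hT w).edges.toFinset, (b e)⁻¹

/-- sign of an edge (v,u) relative to node 0. -/
noncomputable def t (hT : G.IsTree) (v u : Fin (N + 1)) : ℝ :=
  if (P hT v).length = (P hT u).length + 1 then 1 else -1

lemma F_zero (hT : G.IsTree) (b : Sym2 (Fin (N + 1)) → ℝ) (w : Fin (N + 1)) :
    F hT b w 0 = 0 := by
  simp [F, P_zero]

lemma cons_F (hT : G.IsTree) (b : Sym2 (Fin (N + 1)) → ℝ) {v u : Fin (N + 1)}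
    (h : G.Adj v u) (hc : P hT v = Walk.cons h (P hT u)) (w : Fin (N + 1)) :
    F hT b w v = F hT b w u +
      (if s(v, u) ∈ (P hT w).edges.toFinset then (b s(v, u))⁻¹ else 0) := by
  have hv : v ∉ (P hT u).support := by
    have := P_isPath hT v
    rw [hc, Walk.cons_isPath_iff] at this
    exact this.2
  have he : s(v, u) ∉ (P hT u).edges.toFinset := by
    rw [List.mem_toFinset]
    intro hmem
    exact hv ((P hT u).fst_mem_support_of_mem_edges hmem)
  have hedges : (P hT v).edges.toFinset = insert s(v, u) (P hT u).edges.toFinset := by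
    rw [hc, Walk.edges_cons, List.toFinset_cons]
  rw [F, F, hedges]
  by_cases hS : s(v, u) ∈ (P hT w).edges.toFinset
  · rw [Finset.insert_inter_of_mem hS, Finset.sum_insert (by simp [he]), if_pos hS, add_comm]
  · rw [Finset.insert_inter_of_notMem hS, if_neg hS, add_zero]

lemma Fdiff (hT : G.IsTree) (b : Sym2 (Fin (N + 1)) → ℝ) (hb : ∀ e ∈ G.edgeSet, 0 < b e)
    {v u : Fin (N + 1)} (h : G.Adj v u) (w : Fin (N + 1)) :
    b s(v, u) * (F hT b w v - F hT b w u) =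
      if s(v, u) ∈ (P hT w).edges then t hT v u else 0 := by
  have hbpos : 0 < b s(v, u) := hb _ h
  rcases dichotomy hT h with hc | hc
  · have hlen : (P hT v).length = (P hT u).length + 1 := by rw [hc]; rfl
    rw [cons_F hT b h hc w, t, if_pos hlen]
    by_cases hS : s(v, u) ∈ (P hT w).edges
    · rw [if_pos (List.mem_toFinset.2 hS), if_pos hS]
      field_simp
      ring
    · rw [if_neg (fun hx => hS (List.mem_toFinset.1 hx)), if_neg hS]
      ring
  · have hlen : (P hT u).length = (P hT v).length + 1 := by rw [hc]; rfl
    have hlen' : ¬ (P hT v).length = (P hT u).length + 1 := by omega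
    have hswap : s(v, u) = s(u, v) := Sym2.eq_swap
    rw [cons_F hT b h.symm hc w, t, if_neg hlen']
    by_cases hS : s(v, u) ∈ (P hT w).edges
    · rw [hswap] at hS ⊢
      rw [if_pos (List.mem_toFinset.2 hS), if_pos hS]
      have : b s(u, v) ≠ 0 := hswap ▸ hbpos.ne'
      field_simp
      ring
    · rw [hswap] at hS ⊢
      rw [if_neg (fun hx => hS (List.mem_toFinset.1 hx)), if_neg hS]
      ring

lemma key (hT : G.IsTree) (v : Fin (N + 1)) :
    ∀ (a c : Fin (N + 1)) (r : G.Walk a c), c = 0 → r.IsPath →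
      (∑ u : Fin (N + 1), if s(v, u) ∈ r.edges then t hT v u else 0) =
        (if v = a then (1 : ℝ) else 0) - (if v = c then 1 else 0) := by
  intro a c r
  induction r with
  | nil => simp
  | @cons a x c hax rest ih =>
    intro hc hr
    subst hc
    rw [Walk.cons_isPath_iff] at hr
    obtain ⟨hrest, ha⟩ := hr
    have ha0 : a ≠ 0 := fun h0 => ha (h0 ▸ rest.end_mem_support)
    have hrx : rest = P hT x := P_unique hT rest hrest
    have hPa : P hT a = Walk.cons hax rest := by
      refine (P_unique hT _ ?_).symm
      rw [Walk.cons_isPath_iff]; exact ⟨hrest, ha⟩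
    have hlen : (P hT a).length = (P hT x).length + 1 := by rw [hPa, ← hrx]; rfl
    have hnotrest : s(a, x) ∉ rest.edges := fun hmem =>
      ha (rest.fst_mem_support_of_mem_edges hmem)
    have hsplit : ∀ u : Fin (N + 1),
        (if s(v, u) ∈ (Walk.cons hax rest).edges then t hT v u else 0) =
          (if s(v, u) = s(a, x) then t hT v u else 0) +
          (if s(v, u) ∈ rest.edges then t hT v u else 0) := by
      intro u
      rw [Walk.edges_cons]
      by_cases h1 : s(v, u) = s(a, x)
      · rw [if_pos h1, if_pos (List.mem_cons.2 (Or.inl h1)),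
          if_neg (fun hx => hnotrest (h1 ▸ hx)), add_zero]
      · by_cases h2 : s(v, u) ∈ rest.edges
        · rw [if_pos (List.mem_cons.2 (Or.inr h2)), if_neg h1, if_pos h2, zero_add]
        · rw [if_neg h1, if_neg h2, if_neg (by simp [List.mem_cons, h1, h2]), add_zero]
    rw [Finset.sum_congr rfl (fun u _ => hsplit u), Finset.sum_add_distrib, ih rfl hrest]
    have hax' : a ≠ x := hax.ne
    by_cases hva : v = a
    · subst hva
      have hcond : ∀ u : Fin (N + 1), (s(v, u) = s(v, x)) ↔ u = x := fun u => Sym2.congr_right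
      have : (∑ u : Fin (N + 1), if s(v, u) = s(v, x) then t hT v u else 0) = t hT v x := by
        rw [Finset.sum_congr rfl (fun u _ => by rw [if_congr (hcond u) rfl rfl])]
        simp
      rw [this, t, if_pos hlen, if_pos rfl, if_neg hax']
      ring
    · by_cases hvx : v = x
      · subst hvx
        have hcond : ∀ u : Fin (N + 1), (s(v, u) = s(a, v)) ↔ u = a := by
          intro u
          rw [Sym2.eq_swap (a := a)]
          exact Sym2.congr_right
        have : (∑ u : Fin (N + 1), if s(v, u) = s(a, v) then t hT v u else 0) = t hT v a := by
          rw [Finset.sum_congr rfl (fun u _ => by rw [if_congr (hcond u) rfl rfl])]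
          simp
        rw [this, t, if_neg (by omega), if_pos rfl, if_neg hva]
        ring
      · have : (∑ u : Fin (N + 1), if s(v, u) = s(a, x) then t hT v u else 0) = 0 := by
          refine Finset.sum_eq_zero fun u _ => ?_
          rw [if_neg]
          intro hx
          rcases Sym2.eq_iff.1 hx with ⟨h1, _⟩ | ⟨h1, _⟩
          · exact hva h1
          · exact hvx h1
        rw [this, if_neg hva, if_neg hvx]
        ring

end Stmt11Aux2

open Stmt11Aux Stmt11Aux2 in
lemma stmt11_row (N : ℕ) (G : SimpleGraph (Fin (N + 1))) [DecidableRel G.Adj]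
    (hT : G.IsTree) (b : Sym2 (Fin (N + 1)) → ℝ) (hb : ∀ e ∈ G.edgeSet, 0 < b e)
    (i k : Fin N) :
    ∑ j : Fin N, reducedLap N G b i j * F hT b k.succ j.succ =
      if i = k then (1 : ℝ) else 0 := by
  set v : Fin (N + 1) := i.succ with hv
  set w : Fin (N + 1) := k.succ with hw
  set Ff : Fin (N + 1) → ℝ := F hT b w with hF
  set D : ℝ := ∑ u : Fin (N + 1), if G.Adj v u then b s(v, u) else 0 with hD
  have hdiag : reducedLap N G b i i = D := by simp [reducedLap, hD, hv]
  have step1 : ∀ j : Fin N, reducedLap N G b i j * Ff j.succ =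
      (if i = j then D * Ff v else 0) +
      (if G.Adj v j.succ then -(b s(v, j.succ)) * Ff j.succ else 0) := by
    intro j
    by_cases hij : i = j
    · subst hij
      rw [hdiag, if_pos rfl, if_neg (G.irrefl : ¬ G.Adj v v), add_zero]
    · rw [if_neg hij, zero_add]
      show (if i = j then _ else _) * Ff j.succ = _
      rw [if_neg hij]
      by_cases hadj : G.Adj v j.succ
      · rw [if_pos hadj, if_pos hadj, neg_mul]
      · rw [if_neg hadj, if_neg hadj, zero_mul]
  calc ∑ j : Fin N, reducedLap N G b i j * Ff j.succ
      = D * Ff v + ∑ j : Fin N, (if G.Adj v j.succ then -(b s(v, j.succ)) * Ff j.succ else 0) := by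
        rw [Finset.sum_congr rfl (fun j _ => step1 j), Finset.sum_add_distrib]
        congr 1
        simp
    _ = D * Ff v - ∑ u : Fin (N + 1), (if G.Adj v u then b s(v, u) * Ff u else 0) := by
        rw [Fin.sum_univ_succ, sub_add_eq_sub_sub]
        have h0 : Ff (0 : Fin (N + 1)) = 0 := F_zero hT b w
        rw [h0]
        rw [show (if G.Adj v 0 then b s(v, (0 : Fin (N+1))) * 0 else 0) = 0 by simp]
        rw [sub_zero, sub_eq_add_neg, ← Finset.sum_neg_distrib]
        congr 1
        refine Finset.sum_congr rfl fun j _ => ?_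
        by_cases hadj : G.Adj v j.succ <;> simp [hadj]
    _ = ∑ u : Fin (N + 1), (if G.Adj v u then b s(v, u) * (Ff v - Ff u) else 0) := by
        have : ∀ u : Fin (N + 1), (if G.Adj v u then b s(v, u) * (Ff v - Ff u) else 0) =
            (if G.Adj v u then b s(v, u) else 0) * Ff v -
            (if G.Adj v u then b s(v, u) * Ff u else 0) := by
          intro u
          by_cases hadj : G.Adj v u <;> simp [hadj] <;> ring
        rw [Finset.sum_congr rfl (fun u _ => this u), Finset.sum_sub_distrib,
          ← Finset.sum_mul, ← hD]
    _ = ∑ u : Fin (N + 1), (if s(v, u) ∈ (P hT w).edges then t hT v u else 0) := by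
        refine Finset.sum_congr rfl fun u _ => ?_
        by_cases hadj : G.Adj v u
        · rw [if_pos hadj, hF, Fdiff hT b hb hadj w]
        · rw [if_neg hadj, if_neg]
          intro hmem
          exact hadj (G.mem_edgeSet.1 ((P hT w).edges_subset_edgeSet hmem))
    _ = (if v = w then (1 : ℝ) else 0) - (if v = 0 then 1 else 0) :=
        key hT v w 0 (P hT w) rfl (P_isPath hT w)
    _ = if i = k then (1 : ℝ) else 0 := by
        rw [if_neg (Fin.succ_ne_zero i), sub_zero]
        simp [hv, hw, Fin.succ_inj]


open Stmt11Aux Stmt11Aux2 in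
theorem stmt11 (N : ℕ) (G : SimpleGraph (Fin (N + 1))) [DecidableRel G.Adj]
    (hT : G.IsTree) (b : Sym2 (Fin (N + 1)) → ℝ)
    (hb : ∀ e ∈ G.edgeSet, 0 < b e)
    (i j : Fin N) (p : G.Walk i.succ 0) (q : G.Walk j.succ 0)
    (hp : p.IsPath) (hq : q.IsPath) :
    (reducedLap N G b)⁻¹ i j =
      ∑ e ∈ p.edges.toFinset ∩ q.edges.toFinset, (b e)⁻¹ := by
  have hM : reducedLap N G b *
      (Matrix.of fun a c : Fin N => F hT b c.succ a.succ) = 1 := by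
    ext a c
    rw [Matrix.mul_apply, Matrix.one_apply]
    simpa using stmt11_row N G hT b hb a c
  rw [Matrix.inv_eq_right_inv hM]
  rw [P_unique hT p hp, P_unique hT q hq]
  rfl
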